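/- Let p be a prime, n a positive integer, u ∈ Z_p^n with u ≠ 0, and let W be a Z_p-subspace of Z_p^((p-1))[x_1,...,x_n] with W ≠ Z_p^((p-1))[x_1,...,x_n]. Set R = { y ∈ Z_p^n : y^(p-1) ∈ W }, and for k ∈ Z_p set V_k = { y ∈ Z_p^n : y·u = k } and R_k = R ∩ V_k. If V_0 ⊆ R, then for every nonzero k ∈ Z_p, (p-1) · |R_k| ≤ (p-2) · |V_k|. -/

import Mathlib

open MvPolynomial

open Finset

section Helpers

lemma sum_pow_zmod {p : ℕ} [Fact p.Prime] (m : ℕ) :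
    (∑ c : ZMod p, c ^ m) = if m ≠ 0 ∧ (p - 1) ∣ m then -1 else 0 := by
  classical
  rcases eq_or_ne m 0 with rfl | hm
  · have : (∑ c : ZMod p, c ^ 0) = (p : ZMod p) := by
      simp [Finset.card_univ, ZMod.card]
    simp [this, ZMod.natCast_self]
  · have hmap : (Finset.univ.map ⟨(Units.val : (ZMod p)ˣ → ZMod p), Units.val_injective⟩) = Finset.univ \ {0} := by
      ext x
      simp only [Finset.mem_map, Finset.mem_univ, true_and, Function.Embedding.coeFn_mk,
        Finset.mem_sdiff, Finset.mem_singleton]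
      constructor
      · rintro ⟨u, rfl⟩; exact u.ne_zero
      · intro hx; exact ⟨Units.mk0 x hx, rfl⟩
    have h1 : (∑ c : ZMod p, c ^ m) = ∑ c ∈ Finset.univ \ {0}, c ^ m := by
      rw [← Finset.sum_sdiff (Finset.subset_univ {0})]
      simp [zero_pow hm]
    rw [h1, ← hmap, Finset.sum_map]
    simp only [Function.Embedding.coeFn_mk, hm, not_false_iff, true_and]
    have := FiniteField.sum_pow_units (ZMod p) m
    rw [ZMod.card] at this
    rw [this]
    simp [hm]

lemma mult_ne_zero {p : ℕ} {n : ℕ} (hp : p.Prime) (k : Fin n → ℕ)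
    (hk : ∑ j, k j = p - 1) : (Nat.multinomial Finset.univ k : ZMod p) ≠ 0 := by
  rw [Ne, ZMod.natCast_eq_zero_iff]
  intro hdvd
  have hspec := Nat.multinomial_spec Finset.univ k
  have h2 : p ∣ (∑ j, k j).factorial := hdvd.trans (Dvd.intro_left _ hspec)
  rw [hk, hp.dvd_factorial] at h2
  have := hp.two_le
  omega

lemma key_identity {p n : ℕ} [Fact p.Prime] (a : Fin n →₀ ℕ) (ha : ∑ j, a j = p - 1) :
    ∑ y : Fin n → ZMod p, (∏ j, y j ^ (p - 1 - a j)) •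
        ((∑ j, C (y j) * X j : MvPolynomial (Fin n) (ZMod p)) ^ (p - 1))
      = ((-1 : ZMod p) ^ n * (Nat.multinomial Finset.univ ⇑a : ZMod p)) • monomial a 1 := by
  classical
  have hp : p.Prime := Fact.out
  have hp1 : 1 ≤ p - 1 := by have := hp.two_le; omega
  have haj : ∀ j, a j ≤ p - 1 := fun j => ha ▸ Finset.single_le_sum
    (f := fun j => a j) (fun i _ => Nat.zero_le _) (Finset.mem_univ j)
  have hn : n ≠ 0 := by rintro rfl; simp at ha; omega
  have step1 : ∀ y : Fin n → ZMod p,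
      (∏ j, y j ^ (p - 1 - a j)) • ((∑ j, C (y j) * X j : MvPolynomial (Fin n) (ZMod p)) ^ (p - 1))
      = ∑ k ∈ piAntidiag univ (p-1),
          C ((Nat.multinomial Finset.univ k : ZMod p) * ∏ j, y j ^ (p - 1 - a j + k j))
            * ∏ j, X j ^ k j := by
    intro y
    rw [Finset.sum_pow_eq_sum_piAntidiag, Finset.smul_sum]
    refine Finset.sum_congr rfl fun k hk => ?_
    rw [smul_eq_C_mul]
    rw [show ((Nat.multinomial Finset.univ k : MvPolynomial (Fin n) (ZMod p)))
      = C ((Nat.multinomial Finset.univ k : ZMod p)) from (map_natCast C _).symm]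
    simp only [mul_pow, Finset.prod_mul_distrib, ← C_pow, ← map_prod, ← map_mul, pow_add]
    ring_nf
    simp only [← map_mul]
    ring_nf
  rw [Finset.sum_congr rfl fun y _ => step1 y, Finset.sum_comm]
  have step2 : ∀ k : Fin n → ℕ,
      (∑ y : Fin n → ZMod p,
        C ((Nat.multinomial Finset.univ k : ZMod p) * ∏ j, y j ^ (p - 1 - a j + k j))
          * ∏ j, X j ^ k j)
      = C ((Nat.multinomial Finset.univ k : ZMod p)
            * ∏ j, (∑ c : ZMod p, c ^ (p - 1 - a j + k j))) * ∏ j, X j ^ k j := by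
    intro k
    rw [← Finset.sum_mul, ← map_sum, ← Finset.mul_sum]
    congr 2
    rw [Finset.prod_univ_sum, Fintype.piFinset_univ]
  rw [Finset.sum_congr rfl fun k _ => step2 k]
  rw [Finset.sum_eq_single (⇑a : Fin n → ℕ)]
  · -- main term
    have hm : ∀ j, p - 1 - a j + a j = p - 1 := fun j => Nat.sub_add_cancel (haj j)
    have hS : ∀ j : Fin n, (∑ c : ZMod p, c ^ (p - 1 - a j + a j)) = -1 := by
      intro j; rw [hm j, sum_pow_zmod, if_pos ⟨by omega, dvd_refl _⟩]
    rw [Finset.prod_congr rfl fun j _ => hS j, Finset.prod_const, Finset.card_univ,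
      Fintype.card_fin]
    have hXa : (∏ j, X j ^ a j : MvPolynomial (Fin n) (ZMod p)) = monomial a 1 := by
      rw [← prod_X_pow_eq_monomial]
      exact (Finset.prod_subset (Finset.subset_univ _) (by
        intro j _ hj
        rw [Finsupp.notMem_support_iff.mp hj, pow_zero])).symm
    rw [hXa, smul_eq_C_mul]
    ring_nf
  · -- other terms vanish
    intro k hk hka
    rw [Finset.mem_piAntidiag] at hk
    suffices h : (∏ j, (∑ c : ZMod p, c ^ (p - 1 - a j + k j))) = 0 by
      rw [h, mul_zero, map_zero, zero_mul]
    by_contra hne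
    have hall : ∀ j : Fin n, p - 1 ∣ (p - 1 - a j + k j) ∧ (p - 1 - a j + k j) ≠ 0 := by
      intro j
      by_contra hcon
      apply hne
      apply Finset.prod_eq_zero (Finset.mem_univ j)
      rw [sum_pow_zmod, if_neg (by tauto)]
    have hge : ∀ j : Fin n, p - 1 ≤ p - 1 - a j + k j := fun j =>
      Nat.le_of_dvd (Nat.pos_of_ne_zero (hall j).2) (hall j).1
    have hsum : ∑ j, (p - 1 - a j + k j) = ∑ j : Fin n, (p - 1) := by
      rw [Finset.sum_add_distrib, hk.1]
      have : ∑ j, (p - 1 - a j) = (∑ j : Fin n, (p-1)) - ∑ j, a j := by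
        rw [eq_tsub_iff_add_eq_of_le (Finset.sum_le_sum fun j _ => haj j),
          ← Finset.sum_add_distrib]
        exact Finset.sum_congr rfl fun j _ => Nat.sub_add_cancel (haj j)
      rw [this, ha]
      have hnp : p - 1 ≤ ∑ j : Fin n, (p - 1) := by
        rw [Finset.sum_const, Finset.card_univ, Fintype.card_fin]
        calc p - 1 = 1 * (p-1) := (one_mul _).symm
        _ ≤ n * (p-1) := Nat.mul_le_mul_right _ (by omega)
        _ = _ := by rw [smul_eq_mul]
      omega
    have heq : ∀ j : Fin n, p - 1 - a j + k j = p - 1 := by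
      intro j
      by_contra hje
      have hlt : ∑ j : Fin n, (p-1) < ∑ j, (p - 1 - a j + k j) :=
        Finset.sum_lt_sum (fun i _ => hge i) ⟨j, Finset.mem_univ j, lt_of_le_of_ne (hge j) (Ne.symm hje)⟩
      omega
    apply hka
    funext j
    have := heq j
    have := haj j
    omega
  · intro h
    exact absurd (Finset.mem_piAntidiag.mpr ⟨ha, fun j _ => Finset.mem_univ j⟩) h

lemma homog_le_span {p n : ℕ} [Fact p.Prime] :
    homogeneousSubmodule (Fin n) (ZMod p) (p - 1) ≤
      Submodule.span (ZMod p)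
        (Set.range fun y : Fin n → ZMod p =>
          ((∑ j, C (y j) * X j : MvPolynomial (Fin n) (ZMod p)) ^ (p - 1))) := by
  classical
  intro f hf
  rw [mem_homogeneousSubmodule] at hf
  rw [f.as_sum]
  refine Submodule.sum_mem _ fun v hv => ?_
  have hdeg : ∑ j, v j = p - 1 := by
    have h := hf (MvPolynomial.mem_support_iff.mp hv)
    rw [← h]
    simp [Finsupp.weight_apply, Finsupp.sum_fintype]
  have hc : ((-1 : ZMod p) ^ n * (Nat.multinomial Finset.univ ⇑v : ZMod p)) ≠ 0 :=
    mul_ne_zero (pow_ne_zero _ (by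
      intro h; exact one_ne_zero (neg_eq_zero.mp h))) (mult_ne_zero Fact.out _ hdeg)
  have hmono : (monomial v (1 : ZMod p)) ∈ Submodule.span (ZMod p)
      (Set.range fun y : Fin n → ZMod p =>
        ((∑ j, C (y j) * X j : MvPolynomial (Fin n) (ZMod p)) ^ (p - 1))) := by
    have heq : (monomial v (1 : ZMod p)) =
        ((-1 : ZMod p) ^ n * (Nat.multinomial Finset.univ ⇑v : ZMod p))⁻¹ •
          ∑ y : Fin n → ZMod p, (∏ j, y j ^ (p - 1 - v j)) •
            ((∑ j, C (y j) * X j : MvPolynomial (Fin n) (ZMod p)) ^ (p - 1)) := by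
      rw [key_identity v hdeg, smul_smul, inv_mul_cancel₀ hc, one_smul]
    rw [heq]
    exact Submodule.smul_mem _ _ (Submodule.sum_mem _ fun y _ =>
      Submodule.smul_mem _ _ (Submodule.subset_span ⟨y, rfl⟩))
  have : monomial v (coeff v f) = (coeff v f) • monomial v (1 : ZMod p) := by
    rw [smul_monomial, smul_eq_mul, mul_one]
  rw [this]
  exact Submodule.smul_mem _ _ hmono

lemma card_bound {p n : ℕ} [Fact p.Prime]
    (φ : Module.Dual (ZMod p) (MvPolynomial (Fin n) (ZMod p)))
    (A B : MvPolynomial (Fin n) (ZMod p))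
    (hA : φ (A ^ (p - 1)) = 0) (hB : φ (B ^ (p - 1)) ≠ 0) :
    (Finset.univ.filter fun t : ZMod p =>
        t ≠ 0 ∧ φ ((A + MvPolynomial.C t * B) ^ (p - 1)) = 0).card ≤ p - 2 := by
  classical
  have hp : p.Prime := Fact.out
  have hp2 := hp.two_le
  set q : Polynomial (ZMod p) := ∑ i ∈ Finset.range p,
    Polynomial.monomial i (((p - 1).choose i : ZMod p) * φ (A ^ (p - 1 - i) * B ^ i)) with hq
  have heval : ∀ t : ZMod p, q.eval t = φ ((A + MvPolynomial.C t * B) ^ (p - 1)) := by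
    intro t
    have hexp : (A + MvPolynomial.C t * B) ^ (p - 1)
        = ∑ i ∈ Finset.range p,
            (t ^ i * ((p-1).choose i : ZMod p)) • (A ^ (p - 1 - i) * B ^ i) := by
      rw [add_comm, add_pow]
      have : p - 1 + 1 = p := by omega
      rw [this]
      refine Finset.sum_congr rfl fun i hi => ?_
      rw [mul_pow, ← MvPolynomial.C_pow, MvPolynomial.smul_eq_C_mul]
      rw [show (((p-1).choose i : MvPolynomial (Fin n) (ZMod p)))
        = MvPolynomial.C (((p-1).choose i : ZMod p)) from (map_natCast MvPolynomial.C _).symm]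
      rw [map_mul]
      ring
    rw [hexp, map_sum]
    simp only [map_smul, smul_eq_mul]
    rw [hq, Polynomial.eval_finset_sum]
    refine Finset.sum_congr rfl fun i hi => ?_
    rw [Polynomial.eval_monomial]
    ring
  have hcoeff : ∀ i, q.coeff i
      = if i < p then ((p - 1).choose i : ZMod p) * φ (A ^ (p - 1 - i) * B ^ i) else 0 := by
    intro i
    rw [hq, Polynomial.finset_sum_coeff]
    simp only [Polynomial.coeff_monomial]
    rw [Finset.sum_ite_eq' (Finset.range p) i]
    simp [Finset.mem_range]
  have hlead : q.coeff (p - 1) ≠ 0 := by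
    rw [hcoeff, if_pos (by omega)]
    simpa [Nat.sub_self] using hB
  have hq0 : q ≠ 0 := fun h => hlead (by simp [h])
  have hdeg : q.natDegree ≤ p - 1 := by
    refine Polynomial.natDegree_le_iff_coeff_eq_zero.mpr fun i hi => ?_
    rw [hcoeff]
    split_ifs with h
    · have : p - 1 < i := hi
      have hchoose : (p - 1).choose i = 0 := Nat.choose_eq_zero_of_lt (by omega)
      rw [hchoose]; simp
    · rfl
  have hroot0 : (0 : ZMod p) ∈ q.roots.toFinset := by
    rw [Multiset.mem_toFinset, Polynomial.mem_roots hq0]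
    show q.eval 0 = 0
    rw [heval]
    simpa using hA
  have hsub : (Finset.univ.filter fun t : ZMod p =>
      t ≠ 0 ∧ φ ((A + MvPolynomial.C t * B) ^ (p - 1)) = 0) ⊆ q.roots.toFinset.erase 0 := by
    intro t ht
    rw [Finset.mem_filter] at ht
    rw [Finset.mem_erase, Multiset.mem_toFinset, Polynomial.mem_roots hq0]
    exact ⟨ht.2.1, by show q.eval t = 0; rw [heval]; exact ht.2.2⟩
  calc _ ≤ (q.roots.toFinset.erase 0).card := Finset.card_le_card hsub
    _ = q.roots.toFinset.card - 1 := Finset.card_erase_of_mem hroot0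
    _ ≤ Multiset.card q.roots - 1 := Nat.sub_le_sub_right (q.roots.toFinset_card_le) 1
    _ ≤ q.natDegree - 1 := Nat.sub_le_sub_right (Polynomial.card_roots' q) 1
    _ ≤ p - 1 - 1 := Nat.sub_le_sub_right hdeg 1
    _ = p - 2 := by omega

lemma lin_add {p n : ℕ} (z y : Fin n → ZMod p) (t : ZMod p) :
    (∑ j, C ((z + t • y) j) * X j : MvPolynomial (Fin n) (ZMod p))
      = (∑ j, C (z j) * X j) + C t * ∑ j, C (y j) * X j := by
  rw [Finset.mul_sum, ← Finset.sum_add_distrib]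
  refine Finset.sum_congr rfl fun j _ => ?_
  simp only [Pi.add_apply, Pi.smul_apply, smul_eq_mul, map_add, map_mul]
  ring

lemma pow_smul_eq {p n : ℕ} [Fact p.Prime] (c : ZMod p) (hc : c ≠ 0) (y : Fin n → ZMod p) :
    ((∑ j, C ((c • y) j) * X j : MvPolynomial (Fin n) (ZMod p))) ^ (p - 1)
      = (∑ j, C (y j) * X j) ^ (p - 1) := by
  have h : (∑ j, C ((c • y) j) * X j : MvPolynomial (Fin n) (ZMod p))
      = C c * ∑ j, C (y j) * X j := by
    rw [Finset.mul_sum]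
    refine Finset.sum_congr rfl fun j _ => ?_
    simp only [Pi.smul_apply, smul_eq_mul, map_mul]
    ring
  rw [h, mul_pow, ← C_pow, ZMod.pow_card_sub_one_eq_one hc, map_one, one_mul]

lemma dot_add {p n : ℕ} (z y u : Fin n → ZMod p) (t : ZMod p) :
    ∑ j, ((z + t • y) j) * u j = (∑ j, z j * u j) + t * ∑ j, y j * u j := by
  rw [Finset.mul_sum, ← Finset.sum_add_distrib]
  refine Finset.sum_congr rfl fun j _ => ?_
  simp only [Pi.add_apply, Pi.smul_apply, smul_eq_mul]
  ring

lemma dot_smul {p n : ℕ} (y u : Fin n → ZMod p) (c : ZMod p) :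
    ∑ j, ((c • y) j) * u j = c * ∑ j, y j * u j := by
  rw [Finset.mul_sum]
  refine Finset.sum_congr rfl fun j _ => ?_
  simp only [Pi.smul_apply, smul_eq_mul]
  ring

end Helpers


set_option synthInstance.maxHeartbeats 1000000 in
/-- First case of the fraction lemma: if `u ≠ 0`, `W` is a proper subspace of
the homogeneous degree-`(p-1)` polynomials, `R = {y : y^(p-1) ∈ W}`,
`V_k = {y : y·u = k}`, `R_k = R ∩ V_k`, and `V_0 ⊆ R`, then for every nonzero
`k`, `(p-1) * |R_k| ≤ (p-2) * |V_k|`. -/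
theorem fraction_lemma_case_one {p n : ℕ} (hp : p.Prime) (hn : 0 < n)
    (u : Fin n → ZMod p) (hu : u ≠ 0)
    (W : Submodule (ZMod p) (MvPolynomial (Fin n) (ZMod p)))
    (hWle : W ≤ homogeneousSubmodule (Fin n) (ZMod p) (p - 1))
    (hWne : W ≠ homogeneousSubmodule (Fin n) (ZMod p) (p - 1))
    (hV0 : {y : Fin n → ZMod p | ∑ j, y j * u j = 0} ⊆
      {y : Fin n → ZMod p |
        (∑ j, C (y j) * X j : MvPolynomial (Fin n) (ZMod p)) ^ (p - 1) ∈ W}) :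
    ∀ k : ZMod p, k ≠ 0 →
      (p - 1) * ({y : Fin n → ZMod p |
              (∑ j, C (y j) * X j : MvPolynomial (Fin n) (ZMod p)) ^ (p - 1) ∈ W ∧
              ∑ j, y j * u j = k}).ncard ≤
        (p - 2) * ({y : Fin n → ZMod p | ∑ j, y j * u j = k}).ncard := by
  classical
  haveI : Fact p.Prime := ⟨hp⟩
  intro k hk
  obtain ⟨y₀, hy₀⟩ : ∃ y₀ : Fin n → ZMod p,
      (∑ j, C (y₀ j) * X j : MvPolynomial (Fin n) (ZMod p)) ^ (p - 1) ∉ W := by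
    by_contra hcon
    push_neg at hcon
    apply hWne
    refine le_antisymm hWle (le_trans homog_le_span ?_)
    rw [Submodule.span_le]
    rintro _ ⟨y, rfl⟩
    exact hcon y
  have hy₀u : (∑ j, y₀ j * u j) ≠ 0 := fun h => hy₀ (hV0 h)
  set c₀ := (∑ j, y₀ j * u j) with hc₀
  set y₁ : Fin n → ZMod p := c₀⁻¹ • y₀ with hy₁def
  have hy₁u : (∑ j, y₁ j * u j) = 1 := by
    rw [hy₁def, dot_smul, ← hc₀, inv_mul_cancel₀ hy₀u]
  have hy₁ : (∑ j, C (y₁ j) * X j : MvPolynomial (Fin n) (ZMod p)) ^ (p - 1) ∉ W := by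
    rw [hy₁def, pow_smul_eq _ (inv_ne_zero hy₀u)]
    exact hy₀
  obtain ⟨ψ, hψ⟩ : ∃ ψ : Module.Dual (ZMod p) (MvPolynomial (Fin n) (ZMod p) ⧸ W),
      ψ (Submodule.Quotient.mk
        ((∑ j, C (y₁ j) * X j : MvPolynomial (Fin n) (ZMod p)) ^ (p - 1))) ≠ 0 := by
    have hne : (Submodule.Quotient.mk
        ((∑ j, C (y₁ j) * X j : MvPolynomial (Fin n) (ZMod p)) ^ (p - 1)) :
        MvPolynomial (Fin n) (ZMod p) ⧸ W) ≠ 0 := by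
      intro h
      exact hy₁ ((Submodule.Quotient.mk_eq_zero W).mp h)
    by_contra hcon
    push_neg at hcon
    exact hne ((Module.forall_dual_apply_eq_zero_iff (ZMod p) _).mp hcon)
  set φ : Module.Dual (ZMod p) (MvPolynomial (Fin n) (ZMod p)) := ψ.comp W.mkQ with hφdef
  have hφW : ∀ w ∈ W, φ w = 0 := by
    intro w hw
    have h0 : W.mkQ w = 0 := by rwa [Submodule.mkQ_apply, Submodule.Quotient.mk_eq_zero]
    simp [hφdef, h0]
  have hφy₁ : φ ((∑ j, C (y₁ j) * X j : MvPolynomial (Fin n) (ZMod p)) ^ (p - 1)) ≠ 0 := hψ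
  set Rf : ZMod p → Finset (Fin n → ZMod p) := fun t => Finset.univ.filter
    (fun y => (∑ j, C (y j) * X j : MvPolynomial (Fin n) (ZMod p)) ^ (p - 1) ∈ W ∧
      ∑ j, y j * u j = t) with hRf
  set Vf : ZMod p → Finset (Fin n → ZMod p) := fun t => Finset.univ.filter
    (fun y => ∑ j, y j * u j = t) with hVf
  have hmemR : ∀ (t : ZMod p) (y : Fin n → ZMod p), y ∈ Rf t ↔
      ((∑ j, C (y j) * X j : MvPolynomial (Fin n) (ZMod p)) ^ (p - 1) ∈ W ∧
        ∑ j, y j * u j = t) := by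
    intro t y
    rw [hRf]
    simp [Finset.mem_filter]
  have hmemV : ∀ (t : ZMod p) (y : Fin n → ZMod p), y ∈ Vf t ↔ ∑ j, y j * u j = t := by
    intro t y
    rw [hVf]
    simp [Finset.mem_filter]
  have hncardR : ({y : Fin n → ZMod p |
      (∑ j, C (y j) * X j : MvPolynomial (Fin n) (ZMod p)) ^ (p - 1) ∈ W ∧
      ∑ j, y j * u j = k}).ncard = (Rf k).card := by
    rw [Set.ncard_eq_toFinset_card', Set.toFinset_setOf]
  have hncardV : ({y : Fin n → ZMod p | ∑ j, y j * u j = k}).ncard = (Vf k).card := by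
    rw [Set.ncard_eq_toFinset_card', Set.toFinset_setOf]
  rw [hncardR, hncardV]
  have claimB : ∀ t : ZMod p, (Rf t).card = ((Vf 0).filter (fun z =>
      (∑ j, C ((z + t • y₁) j) * X j : MvPolynomial (Fin n) (ZMod p)) ^ (p - 1) ∈ W)).card := by
    intro t
    refine Finset.card_bij' (fun y _ => y + (-t) • y₁) (fun z _ => z + t • y₁) ?_ ?_ ?_ ?_
    · intro y hy
      rw [hmemR] at hy
      rw [Finset.mem_filter, hmemV]
      have hcancel : (y + (-t) • y₁) + t • y₁ = y := by
        ext j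
        simp only [Pi.add_apply, Pi.smul_apply, smul_eq_mul]
        ring
      refine ⟨by rw [dot_add, hy.2, hy₁u]; ring, ?_⟩
      rw [hcancel]
      exact hy.1
    · intro z hz
      rw [Finset.mem_filter, hmemV] at hz
      rw [hmemR]
      refine ⟨hz.2, ?_⟩
      rw [dot_add, hz.1, hy₁u]; ring
    · intro y _
      ext j
      simp only [Pi.add_apply, Pi.smul_apply, smul_eq_mul]
      ring
    · intro z _
      ext j
      simp only [Pi.add_apply, Pi.smul_apply, smul_eq_mul]
      ring
  have claimC : ∀ t : ZMod p, t ≠ 0 → (Rf t).card = (Rf k).card := by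
    intro t ht
    refine Finset.card_bij' (fun y _ => (k * t⁻¹) • y) (fun y _ => (t * k⁻¹) • y) ?_ ?_ ?_ ?_
    · intro y hy
      rw [hmemR] at hy ⊢
      refine ⟨?_, ?_⟩
      · rw [pow_smul_eq _ (mul_ne_zero hk (inv_ne_zero ht))]
        exact hy.1
      · rw [dot_smul, hy.2]
        field_simp
    · intro y hy
      rw [hmemR] at hy ⊢
      refine ⟨?_, ?_⟩
      · rw [pow_smul_eq _ (mul_ne_zero ht (inv_ne_zero hk))]
        exact hy.1
      · rw [dot_smul, hy.2]
        field_simp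
    · intro y _
      rw [smul_smul, show (t * k⁻¹) * (k * t⁻¹) = 1 by field_simp, one_smul]
    · intro y _
      rw [smul_smul, show (k * t⁻¹) * (t * k⁻¹) = 1 by field_simp, one_smul]
  have claimD : (Vf 0).card = (Vf k).card := by
    refine Finset.card_bij' (fun z _ => z + k • y₁) (fun z _ => z + (-k) • y₁) ?_ ?_ ?_ ?_
    · intro z hz
      rw [hmemV] at hz ⊢
      rw [dot_add, hz, hy₁u]; ring
    · intro z hz
      rw [hmemV] at hz ⊢
      rw [dot_add, hz, hy₁u]; ring
    · intro z _
      ext j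
      simp only [Pi.add_apply, Pi.smul_apply, smul_eq_mul]
      ring
    · intro z _
      ext j
      simp only [Pi.add_apply, Pi.smul_apply, smul_eq_mul]
      ring
  have perz : ∀ z ∈ Vf 0, ((Finset.univ.erase (0 : ZMod p)).filter (fun t =>
      (∑ j, C ((z + t • y₁) j) * X j : MvPolynomial (Fin n) (ZMod p)) ^ (p - 1) ∈ W)).card
        ≤ p - 2 := by
    intro z hz
    rw [hmemV] at hz
    have hA : φ ((∑ j, C (z j) * X j : MvPolynomial (Fin n) (ZMod p)) ^ (p - 1)) = 0 :=
      hφW _ (hV0 hz)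
    refine le_trans (Finset.card_le_card ?_) (card_bound φ _ _ hA hφy₁)
    intro t ht
    rw [Finset.mem_filter, Finset.mem_erase] at ht
    rw [Finset.mem_filter]
    refine ⟨Finset.mem_univ _, ht.1.1, ?_⟩
    rw [← lin_add]
    exact hφW _ ht.2
  have hswap : ∑ t ∈ Finset.univ.erase (0 : ZMod p), ((Vf 0).filter (fun z =>
        (∑ j, C ((z + t • y₁) j) * X j : MvPolynomial (Fin n) (ZMod p)) ^ (p - 1) ∈ W)).card
      = ∑ z ∈ Vf 0, ((Finset.univ.erase (0 : ZMod p)).filter (fun t =>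
        (∑ j, C ((z + t • y₁) j) * X j : MvPolynomial (Fin n) (ZMod p)) ^ (p - 1) ∈ W)).card := by
    simp only [Finset.card_filter]
    exact Finset.sum_comm
  have hcard_erase : (Finset.univ.erase (0 : ZMod p)).card = p - 1 := by
    rw [Finset.card_erase_of_mem (Finset.mem_univ _), Finset.card_univ, ZMod.card]
  calc (p - 1) * (Rf k).card
      = ∑ t ∈ Finset.univ.erase (0 : ZMod p), (Rf t).card := by
        rw [Finset.sum_congr rfl fun t ht => claimC t (Finset.mem_erase.mp ht).1,
          Finset.sum_const, hcard_erase, smul_eq_mul]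
    _ = ∑ t ∈ Finset.univ.erase (0 : ZMod p), ((Vf 0).filter (fun z =>
        (∑ j, C ((z + t • y₁) j) * X j : MvPolynomial (Fin n) (ZMod p)) ^ (p - 1) ∈ W)).card :=
        Finset.sum_congr rfl fun t _ => claimB t
    _ = ∑ z ∈ Vf 0, ((Finset.univ.erase (0 : ZMod p)).filter (fun t =>
        (∑ j, C ((z + t • y₁) j) * X j : MvPolynomial (Fin n) (ZMod p)) ^ (p - 1) ∈ W)).card :=
        hswap
    _ ≤ ∑ _z ∈ Vf 0, (p - 2) := Finset.sum_le_sum perz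
    _ = (p - 2) * (Vf 0).card := by rw [Finset.sum_const, smul_eq_mul, mul_comm]
    _ = (p - 2) * (Vf k).card := by rw [claimD]
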